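/- Let n ≥ 2 be an integer, let D be a finite set of n points, and let w : D → [0,1] satisfy (1/n) Σ_{d ∈ D} w_d ≥ 1 − 2ε + 2ε² for some 0 < ε ≤ 1/2. Fix C > 0, 0 < δ < 1/2, and an integer k ≥ (1+C) ln(n) / (2δ²). For each d ∈ D let X₁^d, …, X_k^d be random variables on a common probability space such that for each fixed d the family (X_i^d)_{i=1}^k is independent, each X_i^d takes values in [0,1], and E[X_i^d] = w_d. Then with probability at least 1 − n^{−C}, the number of points d ∈ D with (1/k) Σ_{i=1}^k X_i^d ≤ 1/2 is at most n · (2ε − 2ε²)/(1/2 − δ). -/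

import Mathlib

set_option maxHeartbeats 1000000

open MeasureTheory ProbabilityTheory Real

lemma hoeff_scalar (m : ℝ) (hm0 : 0 ≤ m) (hm1 : m ≤ 1) (s : ℝ) (hs : s ≤ 0) :
    1 - m + m * Real.exp s ≤ Real.exp (s * m + s ^ 2 / 8) := by
  set g : ℝ → ℝ := fun x => 1 - m + m * Real.exp x with hg_def
  have hgpos : ∀ x, 0 < g x := by
    intro x
    rcases eq_or_lt_of_le hm0 with h | h
    · simp [hg_def, ← h]
    · have := Real.exp_pos x
      have : 0 < m * Real.exp x := mul_pos h this
      simp only [hg_def]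
      nlinarith
  have hg' : ∀ x, HasDerivAt g (m * Real.exp x) x := fun x =>
    ((Real.hasDerivAt_exp x).const_mul m).const_add (1 - m)
  set φ : ℝ → ℝ := fun x => m + x / 4 - m * Real.exp x / g x with hφ_def
  have hφ' : ∀ x, HasDerivAt φ
      (1 / 4 - (m * Real.exp x * g x - m * Real.exp x * (m * Real.exp x)) / (g x) ^ 2) x := by
    intro x
    have h1 : HasDerivAt (fun x => m + x / 4) (1 / 4) x := by
      simpa using ((hasDerivAt_id x).div_const 4).const_add m
    have h2 : HasDerivAt (fun x => m * Real.exp x / g x)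
        ((m * Real.exp x * g x - m * Real.exp x * (m * Real.exp x)) / (g x) ^ 2) x :=
      ((Real.hasDerivAt_exp x).const_mul m).div (hg' x) (hgpos x).ne'
    exact h1.sub h2
  have hφderiv_nonneg : ∀ x, 0 ≤ deriv φ x := by
    intro x
    rw [(hφ' x).deriv]
    have hb : 0 < g x := hgpos x
    have ha : 0 ≤ m * Real.exp x := mul_nonneg hm0 (Real.exp_pos x).le
    have hab : m * Real.exp x ≤ g x := by simp only [hg_def]; nlinarith
    rw [sub_nonneg, div_le_iff₀ (by positivity)]
    set a := m * Real.exp x with ha_def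
    set b := g x with hb_def
    clear_value a b
    nlinarith [sq_nonneg (b - 2 * a)]
  have hφmono : Monotone φ := by
    refine monotone_of_deriv_nonneg (fun x => (hφ' x).differentiableAt) hφderiv_nonneg
  have hφ0 : φ 0 = 0 := by
    simp only [hφ_def, hg_def]
    norm_num
  have hφ_nonpos : ∀ x ≤ 0, φ x ≤ 0 := fun x hx => hφ0 ▸ hφmono hx
  set h : ℝ → ℝ := fun x => x * m + x ^ 2 / 8 - Real.log (g x) with hh_def
  have hh' : ∀ x, HasDerivAt h (φ x) x := by
    intro x
    have h1 : HasDerivAt (fun x : ℝ => x * m + x ^ 2 / 8) (m + x / 4) x := by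
      have := ((hasDerivAt_pow 2 x).div_const 8).const_add 0
      have h2 : HasDerivAt (fun y : ℝ => y * m) m x := by
        simpa using (hasDerivAt_id x).mul_const m
      have h3 : HasDerivAt (fun y : ℝ => y ^ 2 / 8) (x / 4) x := by
        have := (hasDerivAt_pow 2 x).div_const 8
        refine this.congr_deriv ?_
        ring
      exact h2.add h3
    have h2 : HasDerivAt (fun x => Real.log (g x)) (m * Real.exp x / g x) x :=
      (hg' x).log (hgpos x).ne'
    exact h1.sub h2
  have hanti : AntitoneOn h (Set.Iic 0) := by
    refine antitoneOn_of_deriv_nonpos (convex_Iic 0)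
      (fun x _ => ((hh' x).differentiableAt.continuousAt).continuousWithinAt)
      (fun x _ => (hh' x).differentiableAt.differentiableWithinAt) ?_
    intro x hx
    rw [(hh' x).deriv]
    exact hφ_nonpos x (le_of_lt (by simpa using hx))
  have hh0 : h 0 = 0 := by simp [hh_def, hg_def]
  have hhs : 0 ≤ h s := by
    have := hanti (Set.mem_Iic.mpr hs) (Set.mem_Iic.mpr le_rfl) hs
    rw [hh0] at this
    exact this
  have hlog : Real.log (g s) ≤ s * m + s ^ 2 / 8 := by
    simp only [hh_def] at hhs; linarith
  calc g s ≤ Real.exp (Real.log (g s)) := le_of_eq (Real.exp_log (hgpos s)).symm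
    _ ≤ Real.exp (s * m + s ^ 2 / 8) := Real.exp_le_exp.mpr hlog

lemma integrable_of_bounded01 {Ω : Type*} [MeasurableSpace Ω] {μ : Measure Ω}
    [IsProbabilityMeasure μ] {Y : Ω → ℝ} (hY : Measurable Y)
    (hr : ∀ ω, Y ω ∈ Set.Icc (0 : ℝ) 1) : Integrable Y μ := by
  refine Integrable.mono' (integrable_const 1) hY.aestronglyMeasurable ?_
  refine ae_of_all _ fun ω => ?_
  rw [Real.norm_eq_abs, abs_of_nonneg (hr ω).1]
  exact (hr ω).2


lemma mgf_neg_le {Ω : Type*} [MeasurableSpace Ω] (μ : Measure Ω) [IsProbabilityMeasure μ]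
    (Y : Ω → ℝ) (hY : Measurable Y) (hr : ∀ ω, Y ω ∈ Set.Icc (0 : ℝ) 1)
    (m : ℝ) (hm : ∫ ω, Y ω ∂μ = m) (t : ℝ) (ht : 0 ≤ t) :
    ∫ ω, Real.exp (-t * Y ω) ∂μ ≤ Real.exp (-t * m + t ^ 2 / 8) := by
  have hYint : Integrable Y μ := integrable_of_bounded01 hY hr
  have hm0 : 0 ≤ m := hm ▸ integral_nonneg fun ω => (hr ω).1
  have hm1 : m ≤ 1 := by
    rw [← hm]
    calc ∫ ω, Y ω ∂μ ≤ ∫ _, (1 : ℝ) ∂μ :=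
          integral_mono hYint (integrable_const 1) fun ω => (hr ω).2
      _ = 1 := by simp
  have hptw : ∀ ω, Real.exp (-t * Y ω) ≤ 1 - Y ω + Y ω * Real.exp (-t) := by
    intro ω
    have h1 : (0 : ℝ) ≤ 1 - Y ω := by linarith [(hr ω).2]
    have h2 : (0 : ℝ) ≤ Y ω := (hr ω).1
    have := convexOn_exp.2 (Set.mem_univ (0 : ℝ)) (Set.mem_univ (-t)) h1 h2 (by ring)
    simp only [smul_eq_mul, mul_zero, zero_add, Real.exp_zero, mul_one] at this
    calc Real.exp (-t * Y ω) = Real.exp (Y ω * -t) := by ring_nf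
      _ ≤ (1 - Y ω) * 1 + Y ω * Real.exp (-t) := by simpa using this
      _ = 1 - Y ω + Y ω * Real.exp (-t) := by ring
  have hint1 : Integrable (fun ω => Real.exp (-t * Y ω)) μ := by
    refine Integrable.mono' (integrable_const 1) ((hY.const_mul (-t)).exp).aestronglyMeasurable ?_
    refine ae_of_all _ fun ω => ?_
    rw [Real.norm_eq_abs, abs_of_pos (Real.exp_pos _)]
    exact Real.exp_le_one_iff.mpr (by nlinarith [(hr ω).1])
  have hint2 : Integrable (fun ω => 1 + (Real.exp (-t) - 1) * Y ω) μ :=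
    (integrable_const 1).add (hYint.const_mul _)
  calc ∫ ω, Real.exp (-t * Y ω) ∂μ ≤ ∫ ω, (1 + (Real.exp (-t) - 1) * Y ω) ∂μ := by
        refine integral_mono hint1 hint2 fun ω => ?_
        have := hptw ω
        linarith [this, sq_nonneg (Y ω)]
    _ = 1 + (Real.exp (-t) - 1) * m := by
        rw [integral_add (integrable_const 1) (hYint.const_mul _), MeasureTheory.integral_const_mul, hm]
        simp
    _ = 1 - m + m * Real.exp (-t) := by ring
    _ ≤ Real.exp (-t * m + (-t) ^ 2 / 8) := hoeff_scalar m hm0 hm1 (-t) (by linarith)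
    _ = Real.exp (-t * m + t ^ 2 / 8) := by ring_nf

lemma chernoff_point {Ω : Type*} [MeasurableSpace Ω] (μ : Measure Ω) [IsProbabilityMeasure μ]
    {k : ℕ} (Y : Fin k → Ω → ℝ) (hmeas : ∀ i, Measurable (Y i))
    (hind : iIndepFun Y μ)
    (hrange : ∀ i ω, Y i ω ∈ Set.Icc (0 : ℝ) 1) (m : ℝ) (hmean : ∀ i, ∫ ω, Y i ω ∂μ = m)
    (δ : ℝ) (hδ : 0 < δ) (hm : 1 / 2 + δ ≤ m) :
    μ {ω | ∑ i, Y i ω ≤ (k : ℝ) / 2} ≤ ENNReal.ofReal (Real.exp (-(2 * k * δ ^ 2))) := by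
  set t : ℝ := 4 * δ with ht_def
  have ht : 0 ≤ t := by positivity
  set Z : Fin k → Ω → ℝ := fun i => -(Y i) with hZ_def
  have hZmeas : ∀ i, Measurable (Z i) := fun i => (hmeas i).neg
  have hZind : iIndepFun Z μ := by
    have := hind.comp (fun _ => fun x : ℝ => -x) (fun _ => measurable_neg)
    exact this
  have hexp_int : ∀ i, Integrable (fun ω => Real.exp (t * Z i ω)) μ := by
    intro i
    refine Integrable.mono' (integrable_const 1)
      (((hZmeas i).const_mul t).exp).aestronglyMeasurable (ae_of_all _ fun ω => ?_)
    rw [Real.norm_eq_abs, abs_of_pos (Real.exp_pos _)]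
    refine Real.exp_le_one_iff.mpr ?_
    have := (hrange i ω).1
    simp only [hZ_def, Pi.neg_apply]
    nlinarith
  have hS_eq : (∑ i, Z i) = fun ω => -(∑ i, Y i ω) := by
    funext ω
    simp [hZ_def, Finset.sum_apply]
  have hYsum_meas : Measurable fun ω => ∑ i, Y i ω :=
    Finset.measurable_sum Finset.univ fun i _ => hmeas i
  have hsum_int : Integrable (fun ω => Real.exp (t * (∑ i, Z i) ω)) μ := by
    rw [hS_eq]
    refine Integrable.mono' (integrable_const 1)
      ((hYsum_meas.neg.const_mul t).exp).aestronglyMeasurable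
      (ae_of_all _ fun ω => ?_)
    rw [Real.norm_eq_abs, abs_of_pos (Real.exp_pos _)]
    refine Real.exp_le_one_iff.mpr ?_
    have hsum : 0 ≤ ∑ i, Y i ω := Finset.sum_nonneg fun i _ => (hrange i _).1
    show t * -(∑ i, Y i ω) ≤ 0
    nlinarith
  have hchern := measure_ge_le_exp_mul_mgf (X := ∑ i, Z i) (μ := μ) (t := t)
    (-((k : ℝ) / 2)) ht hsum_int
  have hmgf_sum : mgf (∑ i, Z i) μ t = ∏ i, mgf (Z i) μ t := hZind.mgf_sum hZmeas Finset.univ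
  have hmgf_le : ∀ i, mgf (Z i) μ t ≤ Real.exp (-t * m + t ^ 2 / 8) := by
    intro i
    have : mgf (Z i) μ t = ∫ ω, Real.exp (-t * Y i ω) ∂μ := by
      unfold mgf
      congr 1
      funext ω
      simp only [hZ_def, Pi.neg_apply]
      ring_nf
    rw [this]
    exact mgf_neg_le μ (Y i) (hmeas i) (hrange i) m (hmean i) t ht
  have hprod_le : ∏ i, mgf (Z i) μ t ≤ Real.exp (-t * m + t ^ 2 / 8) ^ k := by
    calc ∏ i : Fin k, mgf (Z i) μ t ≤ ∏ _i : Fin k, Real.exp (-t * m + t ^ 2 / 8) :=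
          Finset.prod_le_prod (fun i _ => mgf_nonneg) (fun i _ => hmgf_le i)
      _ = Real.exp (-t * m + t ^ 2 / 8) ^ k := by simp
  have hev : {ω | ∑ i, Y i ω ≤ (k : ℝ) / 2} = {ω | -((k : ℝ) / 2) ≤ (∑ i, Z i) ω} := by
    ext ω
    rw [hS_eq]
    simp only [Set.mem_setOf_eq]
    constructor <;> intro h <;> linarith
  have hbound : (μ {ω | ∑ i, Y i ω ≤ (k : ℝ) / 2}).toReal ≤ Real.exp (-(2 * k * δ ^ 2)) := by
    rw [hev]
    refine hchern.trans ?_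
    calc Real.exp (-t * -((k : ℝ) / 2)) * mgf (∑ i, Z i) μ t
        ≤ Real.exp (-t * -((k : ℝ) / 2)) * Real.exp (-t * m + t ^ 2 / 8) ^ k := by
          rw [hmgf_sum]
          exact mul_le_mul_of_nonneg_left hprod_le (Real.exp_nonneg _)
      _ = Real.exp (-t * -((k : ℝ) / 2) + (k : ℝ) * (-t * m + t ^ 2 / 8)) := by
          rw [← Real.exp_nat_mul, ← Real.exp_add]
      _ ≤ Real.exp (-(2 * k * δ ^ 2)) := by
          refine Real.exp_le_exp.mpr ?_
          have hk0 : (0 : ℝ) ≤ (k : ℝ) := Nat.cast_nonneg k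
          have := mul_le_mul_of_nonneg_left hm (by positivity : (0:ℝ) ≤ 4 * δ * (k:ℝ))
          simp only [ht_def]
          nlinarith
  rw [← ENNReal.ofReal_toReal (measure_ne_top μ _)]
  exact ENNReal.ofReal_le_ofReal hbound

open Classical in
/-- empirical error bound for threshold averaging: if the average weight of
the `n` points of `D` is at least `1 - 2ε + 2ε²`, and for each `d` the scores
`X d 1, …, X d k` are independent `[0,1]`-valued with mean `w d`, where
`k ≥ (1+C) ln n / (2δ²)`, then with probability at least `1 - n^(-C)` at most
`n (2ε - 2ε²)/(1/2 - δ)` points have average score at most `1/2`. -/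
theorem empirical_error_threshold_averaging
    {Ω α : Type*} [MeasurableSpace Ω] (μ : Measure Ω) [IsProbabilityMeasure μ]
    (n : ℕ) (hn : 2 ≤ n) (D : Finset α) (hD : D.card = n)
    (w : α → ℝ) (hw : ∀ d ∈ D, w d ∈ Set.Icc (0 : ℝ) 1)
    (ε : ℝ) (hε0 : 0 < ε) (hε : ε ≤ 1 / 2)
    (havg : (1 / (n : ℝ)) * ∑ d ∈ D, w d ≥ 1 - 2 * ε + 2 * ε ^ 2)
    (C δ : ℝ) (hC : 0 < C) (hδ0 : 0 < δ) (hδ : δ < 1 / 2)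
    (k : ℕ) (hk : (1 + C) * Real.log n / (2 * δ ^ 2) ≤ (k : ℝ))
    (X : α → Fin k → Ω → ℝ)
    (hmeas : ∀ d ∈ D, ∀ i, Measurable (X d i))
    (hindep : ∀ d ∈ D, iIndepFun (X d) μ)
    (hrange : ∀ d ∈ D, ∀ i, ∀ ω, X d i ω ∈ Set.Icc (0 : ℝ) 1)
    (hmean : ∀ d ∈ D, ∀ i, ∫ ω, X d i ω ∂μ = w d) :
    μ {ω | ((D.filter fun d => (1 / (k : ℝ)) * ∑ i, X d i ω ≤ 1 / 2).card : ℝ) ≤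
        (n : ℝ) * (2 * ε - 2 * ε ^ 2) / (1 / 2 - δ)} ≥
      1 - ENNReal.ofReal ((n : ℝ) ^ (-C)) := by
  classical
  have hnpos : (0 : ℝ) < n := by
    have : (2 : ℝ) ≤ n := by exact_mod_cast hn
    linarith
  have hn1 : (1 : ℝ) < n := by
    have : (2 : ℝ) ≤ n := by exact_mod_cast hn
    linarith
  have hlogn : 0 < Real.log n := Real.log_pos hn1
  have hhalfδ : (0 : ℝ) < 1 / 2 - δ := by linarith
  have hkRpos : (0 : ℝ) < (k : ℝ) :=
    lt_of_lt_of_le (by positivity) hk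
  -- Step A : bad points
  set B : Finset α := D.filter (fun d => w d ≤ 1 / 2 + δ) with hB_def
  have hStepA : (B.card : ℝ) ≤ (n : ℝ) * (2 * ε - 2 * ε ^ 2) / (1 / 2 - δ) := by
    have hsum_w : (n : ℝ) * (1 - 2 * ε + 2 * ε ^ 2) ≤ ∑ d ∈ D, w d := by
      have h := mul_le_mul_of_nonneg_left havg hnpos.le
      rw [← mul_assoc, mul_one_div, div_self hnpos.ne', one_mul] at h
      linarith
    have h1 : ∑ d ∈ D, (1 - w d) ≤ (n : ℝ) * (2 * ε - 2 * ε ^ 2) := by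
      rw [Finset.sum_sub_distrib, Finset.sum_const, hD, nsmul_eq_mul, mul_one]
      nlinarith
    have h2 : (B.card : ℝ) * (1 / 2 - δ) ≤ ∑ d ∈ B, (1 - w d) := by
      have := Finset.card_nsmul_le_sum B (fun d => 1 - w d) (1 / 2 - δ)
        (fun d hd => by
          rw [hB_def, Finset.mem_filter] at hd
          linarith [hd.2])
      simpa [nsmul_eq_mul] using this
    have h3 : ∑ d ∈ B, (1 - w d) ≤ ∑ d ∈ D, (1 - w d) := by
      refine Finset.sum_le_sum_of_subset_of_nonneg (Finset.filter_subset _ _) ?_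
      intro d hd _
      linarith [(hw d hd).2]
    rw [le_div_iff₀ hhalfδ]
    linarith
  -- events
  set A : α → Set Ω := fun d => {ω | (1 / (k : ℝ)) * ∑ i, X d i ω ≤ 1 / 2} with hA_def
  have hiff : ∀ S : ℝ, ((1 / (k : ℝ)) * S ≤ 1 / 2 ↔ S ≤ (k : ℝ) / 2) := by
    intro S
    rw [one_div_mul_eq_div, div_le_div_iff₀ hkRpos (by norm_num : (0 : ℝ) < 2)]
    constructor <;> intro h <;> nlinarith
  set G : Finset α := D.filter (fun d => ¬ (w d ≤ 1 / 2 + δ)) with hG_def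
  set E : Set Ω := ⋃ d ∈ G, A d with hE_def
  have hAd_meas : ∀ d ∈ D, MeasurableSet (A d) := by
    intro d hd
    exact measurableSet_le
      ((Finset.measurable_sum Finset.univ fun i _ => hmeas d hd i).const_mul _)
      measurable_const
  have hE_meas : MeasurableSet E :=
    G.measurableSet_biUnion fun d hd => hAd_meas d (Finset.filter_subset _ _ hd)
  have hμA : ∀ d ∈ G, μ (A d) ≤ ENNReal.ofReal (Real.exp (-(2 * k * δ ^ 2))) := by
    intro d hd
    rw [hG_def, Finset.mem_filter] at hd
    have hdD := hd.1
    have hwd : 1 / 2 + δ ≤ w d := le_of_lt (lt_of_not_ge hd.2)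
    have hA_eq : A d = {ω | ∑ i, X d i ω ≤ (k : ℝ) / 2} := by
      ext ω
      exact hiff _
    rw [hA_eq]
    exact chernoff_point μ (X d) (hmeas d hdD) (hindep d hdD) (hrange d hdD) (w d)
      (hmean d hdD) δ hδ0 hwd
  have hexp_le : (n : ℝ) * Real.exp (-(2 * k * δ ^ 2)) ≤ (n : ℝ) ^ (-C) := by
    have h2k : (1 + C) * Real.log n ≤ (k : ℝ) * (2 * δ ^ 2) := by
      rw [div_le_iff₀ (by positivity : (0 : ℝ) < 2 * δ ^ 2)] at hk
      linarith
    have h1 : Real.exp (-(2 * k * δ ^ 2)) ≤ Real.exp (Real.log n * (-(1 + C))) := by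
      refine Real.exp_le_exp.mpr ?_
      nlinarith
    have h2 : Real.exp (Real.log n * (-(1 + C))) = (n : ℝ) ^ (-(1 + C)) :=
      (Real.rpow_def_of_pos hnpos _).symm
    calc (n : ℝ) * Real.exp (-(2 * k * δ ^ 2))
        ≤ (n : ℝ) * (n : ℝ) ^ (-(1 + C)) := by
          rw [← h2]
          exact mul_le_mul_of_nonneg_left h1 hnpos.le
      _ = (n : ℝ) ^ ((1 : ℝ) + -(1 + C)) := by
          rw [Real.rpow_add hnpos, Real.rpow_one]
      _ = (n : ℝ) ^ (-C) := by norm_num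
  have hμE : μ E ≤ ENNReal.ofReal ((n : ℝ) ^ (-C)) := by
    calc μ E ≤ ∑ d ∈ G, μ (A d) := measure_biUnion_finset_le G A
      _ ≤ ∑ _d ∈ G, ENNReal.ofReal (Real.exp (-(2 * k * δ ^ 2))) :=
          Finset.sum_le_sum hμA
      _ = (G.card : ENNReal) * ENNReal.ofReal (Real.exp (-(2 * k * δ ^ 2))) := by
          rw [Finset.sum_const, nsmul_eq_mul]
      _ ≤ (n : ENNReal) * ENNReal.ofReal (Real.exp (-(2 * k * δ ^ 2))) := by
          gcongr
          exact_mod_cast hD ▸ Finset.card_filter_le D _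
      _ = ENNReal.ofReal ((n : ℝ) * Real.exp (-(2 * k * δ ^ 2))) := by
          rw [ENNReal.ofReal_mul (by positivity), ENNReal.ofReal_natCast]
      _ ≤ ENNReal.ofReal ((n : ℝ) ^ (-C)) := ENNReal.ofReal_le_ofReal hexp_le
  -- complement inclusion
  have hsubset : Eᶜ ⊆ {ω | ((D.filter fun d => (1 / (k : ℝ)) * ∑ i, X d i ω ≤ 1 / 2).card : ℝ) ≤
      (n : ℝ) * (2 * ε - 2 * ε ^ 2) / (1 / 2 - δ)} := by
    intro ω hω
    simp only [Set.mem_setOf_eq]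
    have hfil : (D.filter fun d => (1 / (k : ℝ)) * ∑ i, X d i ω ≤ 1 / 2) ⊆ B := by
      intro d hd
      rw [Finset.mem_filter] at hd
      rw [hB_def, Finset.mem_filter]
      refine ⟨hd.1, ?_⟩
      by_contra hcon
      have hdG : d ∈ G := by
        rw [hG_def, Finset.mem_filter]
        exact ⟨hd.1, hcon⟩
      have : ω ∈ E := Set.mem_biUnion hdG hd.2
      exact hω this
    calc ((D.filter fun d => (1 / (k : ℝ)) * ∑ i, X d i ω ≤ 1 / 2).card : ℝ)
        ≤ (B.card : ℝ) := by exact_mod_cast Finset.card_le_card hfil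
      _ ≤ (n : ℝ) * (2 * ε - 2 * ε ^ 2) / (1 / 2 - δ) := hStepA
  calc μ {ω | ((D.filter fun d => (1 / (k : ℝ)) * ∑ i, X d i ω ≤ 1 / 2).card : ℝ) ≤
        (n : ℝ) * (2 * ε - 2 * ε ^ 2) / (1 / 2 - δ)}
      ≥ μ Eᶜ := measure_mono hsubset
    _ = 1 - μ E := prob_compl_eq_one_sub hE_meas
    _ ≥ 1 - ENNReal.ofReal ((n : ℝ) ^ (-C)) := tsub_le_tsub_left hμE 1
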